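/- Let X ⊂ ℝ^{2n} be a symplectically self-polar convex body. Then P ⋉_ω X = conv((P × {0}) ∪ ({u,−u} × X)), where P ⋉_ω X = {(v,x) ∈ P × ℝ^{2n} : |ω₂(u,v)| + ‖x‖_X ≤ 1}, P = conv{±(1,1),±(1,0),±(0,1)} ⊂ ℝ², u = (1,1). -/
import Mathlib


open Set

/-- The standard symplectic form on ℝ^{2n} = (Fin n → ℝ) × (Fin n → ℝ). -/
noncomputable def symForm (n : ℕ) (x y : (Fin n → ℝ) × (Fin n → ℝ)) : ℝ :=
  ∑ i, (x.1 i * y.2 i - x.2 i * y.1 i)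

/-- The symplectic polar of a set in ℝ^{2n}. -/
def sPolar (n : ℕ) (X : Set ((Fin n → ℝ) × (Fin n → ℝ))) : Set ((Fin n → ℝ) × (Fin n → ℝ)) :=
  {y | ∀ x ∈ X, symForm n x y ≤ 1}

/-- The standard area (symplectic) form on ℝ². -/
noncomputable def omega2 (v w : ℝ × ℝ) : ℝ := v.1 * w.2 - v.2 * w.1

/-- The hexagon P = conv{±(1,1), ±(1,0), ±(0,1)}. -/
noncomputable def hexP : Set (ℝ × ℝ) :=
  convexHull ℝ {(1,1), (1,0), (0,1), (-1,-1), (-1,0), (0,-1)}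

/-- ℝ^{2n+2} = ℝ² × ℝ^{2n}. -/
abbrev Amb (n : ℕ) := (ℝ × ℝ) × ((Fin n → ℝ) × (Fin n → ℝ))

/-- The direct-sum symplectic form on ℝ² × ℝ^{2n}. -/
noncomputable def symFormS (n : ℕ) (p q : Amb n) : ℝ :=
  omega2 p.1 q.1 + symForm n p.2 q.2

/-- The symplectic polar of a set in ℝ² × ℝ^{2n}. -/
def sPolarS (n : ℕ) (S : Set (Amb n)) : Set (Amb n) :=
  {q | ∀ p ∈ S, symFormS n p q ≤ 1}

/-- The symplectic P-suspension of a centrally symmetric convex body X ⊂ ℝ^{2n}. -/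
noncomputable def susp (n : ℕ) (X : Set ((Fin n → ℝ) × (Fin n → ℝ))) : Set (Amb n) :=
  {p | p.1 ∈ hexP ∧ |omega2 (1,1) p.1| + gauge X p.2 ≤ 1}

lemma combo3 {E : Type*} [AddCommGroup E] [Module ℝ E] {S : Set E} (h : Convex ℝ S)
    {x y z : E} (hx : x ∈ S) (hy : y ∈ S) (hz : z ∈ S) {a b c : ℝ}
    (ha : 0 ≤ a) (hb : 0 ≤ b) (hc : 0 ≤ c) (habc : a + b + c = 1) :
    a • x + b • y + c • z ∈ S := by
  rcases eq_or_lt_of_le (add_nonneg ha hb) with hd | hd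
  · have ha0 : a = 0 := by linarith
    have hb0 : b = 0 := by linarith
    have hc1 : c = 1 := by linarith
    simp [ha0, hb0, hc1, hz]
  · have key : a • x + b • y = (a+b) • ((a/(a+b)) • x + (b/(a+b)) • y) := by
      rw [smul_add, smul_smul, smul_smul, mul_div_cancel₀ _ hd.ne', mul_div_cancel₀ _ hd.ne']
    rw [key]
    exact h (h hx hy (div_nonneg ha hd.le) (div_nonneg hb hd.le)
      (by field_simp)) hz (add_nonneg ha hb) hc habc

lemma hexP_convex : Convex ℝ hexP := convex_convexHull ℝ _

lemma mem_hexP_of_vertex (v : ℝ × ℝ)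
    (hv : v ∈ ({(1,1), (1,0), (0,1), (-1,-1), (-1,0), (0,-1)} : Set (ℝ × ℝ))) : v ∈ hexP :=
  subset_convexHull ℝ _ hv

lemma zero_mem_hexP : (0 : ℝ × ℝ) ∈ hexP := by
  have h1 : ((1,1) : ℝ × ℝ) ∈ hexP := mem_hexP_of_vertex _ (by simp)
  have h2 : ((-1,-1) : ℝ × ℝ) ∈ hexP := mem_hexP_of_vertex _ (by simp)
  have := hexP_convex h1 h2 (by norm_num : (0:ℝ) ≤ 1/2) (by norm_num : (0:ℝ) ≤ 1/2) (by norm_num)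
  convert this using 1
  ext <;> simp <;> norm_num

lemma mem_hexP_iff (v : ℝ × ℝ) :
    v ∈ hexP ↔ |v.1| ≤ 1 ∧ |v.2| ≤ 1 ∧ |v.1 - v.2| ≤ 1 := by
  constructor
  · intro hv
    have hsub : hexP ⊆ {w : ℝ × ℝ | |w.1| ≤ 1 ∧ |w.2| ≤ 1 ∧ |w.1 - w.2| ≤ 1} := by
      apply convexHull_min
      · rintro w hw
        simp only [mem_insert_iff, mem_singleton_iff] at hw
        rcases hw with rfl | rfl | rfl | rfl | rfl | rfl <;> simp <;> norm_num
      · rintro ⟨x1, x2⟩ ⟨hx1, hx2, hx3⟩ ⟨y1, y2⟩ ⟨hy1, hy2, hy3⟩ a b ha hb hab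
        have e1 : |a * x1 + b * y1| ≤ a * |x1| + b * |y1| := by
          calc |a * x1 + b * y1| ≤ |a * x1| + |b * y1| := abs_add_le _ _
          _ = a * |x1| + b * |y1| := by
            rw [abs_mul, abs_mul, abs_of_nonneg ha, abs_of_nonneg hb]
        have e2 : |a * x2 + b * y2| ≤ a * |x2| + b * |y2| := by
          calc |a * x2 + b * y2| ≤ |a * x2| + |b * y2| := abs_add_le _ _
          _ = a * |x2| + b * |y2| := by
            rw [abs_mul, abs_mul, abs_of_nonneg ha, abs_of_nonneg hb]
        have e3 : |(a * x1 + b * y1) - (a * x2 + b * y2)| ≤ a * |x1 - x2| + b * |y1 - y2| := by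
          calc |(a * x1 + b * y1) - (a * x2 + b * y2)| = |a * (x1 - x2) + b * (y1 - y2)| := by
                ring_nf
          _ ≤ |a * (x1 - x2)| + |b * (y1 - y2)| := abs_add_le _ _
          _ = a * |x1 - x2| + b * |y1 - y2| := by
            rw [abs_mul, abs_mul, abs_of_nonneg ha, abs_of_nonneg hb]
        refine ⟨?_, ?_, ?_⟩ <;> simp only [Prod.smul_fst, Prod.smul_snd, Prod.fst_add,
          Prod.snd_add, smul_eq_mul]
        · nlinarith
        · nlinarith
        · nlinarith
    exact hsub hv
  · rintro ⟨h1, h2, h3⟩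
    obtain ⟨a, b⟩ := v
    simp only at h1 h2 h3
    rw [abs_le] at h1 h2 h3
    rcases le_total 0 a with ha | ha <;> rcases le_total 0 b with hb | hb
    · rcases le_total b a with hba | hba
      · have := combo3 hexP_convex (mem_hexP_of_vertex (1,0) (by simp))
          (mem_hexP_of_vertex (1,1) (by simp)) zero_mem_hexP
          (by linarith : (0:ℝ) ≤ a - b) hb (by linarith : (0:ℝ) ≤ 1 - a) (by ring)
        convert this using 1
        ext <;> simp
      · have := combo3 hexP_convex (mem_hexP_of_vertex (0,1) (by simp))
          (mem_hexP_of_vertex (1,1) (by simp)) zero_mem_hexP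
          (by linarith : (0:ℝ) ≤ b - a) ha (by linarith : (0:ℝ) ≤ 1 - b) (by ring)
        convert this using 1
        ext <;> simp
    · have := combo3 hexP_convex (mem_hexP_of_vertex (1,0) (by simp))
        (mem_hexP_of_vertex (0,-1) (by simp)) zero_mem_hexP
        ha (by linarith : (0:ℝ) ≤ -b) (by linarith : (0:ℝ) ≤ 1 - a + b) (by ring)
      convert this using 1
      ext <;> simp
    · have := combo3 hexP_convex (mem_hexP_of_vertex (-1,0) (by simp))
        (mem_hexP_of_vertex (0,1) (by simp)) zero_mem_hexP
        (by linarith : (0:ℝ) ≤ -a) hb (by linarith : (0:ℝ) ≤ 1 + a - b) (by ring)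
      convert this using 1
      ext <;> simp
    · rcases le_total a b with hab | hab
      · have := combo3 hexP_convex (mem_hexP_of_vertex (-1,0) (by simp))
          (mem_hexP_of_vertex (-1,-1) (by simp)) zero_mem_hexP
          (by linarith : (0:ℝ) ≤ b - a) (by linarith : (0:ℝ) ≤ -b)
          (by linarith : (0:ℝ) ≤ 1 + a) (by ring)
        convert this using 1
        ext <;> simp <;> ring
      · have := combo3 hexP_convex (mem_hexP_of_vertex (0,-1) (by simp))
          (mem_hexP_of_vertex (-1,-1) (by simp)) zero_mem_hexP
          (by linarith : (0:ℝ) ≤ a - b) (by linarith : (0:ℝ) ≤ -a)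
          (by linarith : (0:ℝ) ≤ 1 + b) (by ring)
        convert this using 1
        ext <;> simp <;> ring

lemma homega (v : ℝ × ℝ) : omega2 (1,1) v = v.2 - v.1 := by simp [omega2]

theorem stmt6 (n : ℕ) (X : Set ((Fin n → ℝ) × (Fin n → ℝ)))
    (hconv : Convex ℝ X) (hcomp : IsCompact X) (hsym : ∀ x ∈ X, -x ∈ X)
    (h0 : (0 : (Fin n → ℝ) × (Fin n → ℝ)) ∈ interior X)
    (hself : X = sPolar n X) :
    susp n X = convexHull ℝ
      ((hexP ×ˢ ({0} : Set ((Fin n → ℝ) × (Fin n → ℝ)))) ∪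
        (({(1,1), (-1,-1)} : Set (ℝ × ℝ)) ×ˢ X)) := by
  have hnhds : X ∈ nhds 0 := mem_interior_iff_mem_nhds.mp h0
  have habs : Absorbent ℝ X := absorbent_nhds_zero hnhds
  have hbdd : Bornology.IsVonNBounded ℝ X :=
    NormedSpace.isVonNBounded_of_isBounded _ hcomp.isBounded
  have hmem_iff : ∀ y, gauge X y ≤ 1 ↔ y ∈ X := fun y => by
    rw [gauge_le_one_iff_mem_closure hconv hnhds, hcomp.isClosed.closure_eq]
  apply Subset.antisymm
  · -- susp ⊆ hull
    rintro ⟨v, x⟩ ⟨hv, hb⟩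
    simp only [homega] at hb
    obtain ⟨h1, h2, h3⟩ := (mem_hexP_iff v).mp hv
    rw [abs_le] at h1 h2
    set t := gauge X x with htdef
    have ht0 : 0 ≤ t := gauge_nonneg x
    have h4 : |v.1 - v.2| ≤ 1 - t := by rw [abs_sub_comm]; linarith
    rw [abs_le] at h4
    have ht1 : t ≤ 1 := by
      have := abs_nonneg (v.2 - v.1); linarith
    rcases eq_or_lt_of_le ht0 with hteq | htpos
    · have hx0 : x = 0 := (gauge_eq_zero habs hbdd).mp hteq.symm
      exact subset_convexHull ℝ _ (Or.inl ⟨hv, by simp [hx0]⟩)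
    · set x' := t⁻¹ • x with hx'def
      have hgx' : gauge X x' = 1 := by
        rw [hx'def, gauge_smul_of_nonneg (inv_nonneg.mpr ht0), ← htdef, smul_eq_mul,
          inv_mul_cancel₀ htpos.ne']
      have hx' : x' ∈ X := (hmem_iff x').mp hgx'.le
      have hxx : x = t • x' := (smul_inv_smul₀ htpos.ne' x).symm
      have hp1 : (((1,1) : ℝ × ℝ), x') ∈ convexHull ℝ
          ((hexP ×ˢ ({0} : Set ((Fin n → ℝ) × (Fin n → ℝ)))) ∪
            (({(1,1), (-1,-1)} : Set (ℝ × ℝ)) ×ˢ X)) :=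
        subset_convexHull ℝ _ (Or.inr ⟨by simp, hx'⟩)
      have hp2 : (((-1,-1) : ℝ × ℝ), x') ∈ convexHull ℝ
          ((hexP ×ˢ ({0} : Set ((Fin n → ℝ) × (Fin n → ℝ)))) ∪
            (({(1,1), (-1,-1)} : Set (ℝ × ℝ)) ×ˢ X)) :=
        subset_convexHull ℝ _ (Or.inr ⟨by simp, hx'⟩)
      set s := max (-t) (max v.1 v.2 - (1 - t)) with hsdef
      have hM1 : v.1 ≤ max v.1 v.2 := le_max_left _ _
      have hM2 : v.2 ≤ max v.1 v.2 := le_max_right _ _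
      have hM3 : max v.1 v.2 ≤ v.1 + (1 - t) := by
        rcases max_cases v.1 v.2 with ⟨he, _⟩ | ⟨he, _⟩ <;> rw [he] <;> linarith
      have hM4 : max v.1 v.2 ≤ v.2 + (1 - t) := by
        rcases max_cases v.1 v.2 with ⟨he, _⟩ | ⟨he, _⟩ <;> rw [he] <;> linarith
      have hM5 : max v.1 v.2 ≤ 1 := max_le h1.2 h2.2
      have hs1 : -t ≤ s := le_max_left _ _
      have hs2 : s ≤ t := max_le (by linarith) (by linarith)
      have hsr : max v.1 v.2 - (1 - t) ≤ s := le_max_right _ _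
      have hs_ub1 : s ≤ v.1 + (1 - t) := max_le (by linarith) (by linarith)
      have hs_ub2 : s ≤ v.2 + (1 - t) := max_le (by linarith) (by linarith)
      have hs_lb1 : v.1 - (1 - t) ≤ s := by linarith
      have hs_lb2 : v.2 - (1 - t) ≤ s := by linarith
      rcases eq_or_lt_of_le ht1 with hte | htlt
      · -- t = 1
        have hveq : v.1 = v.2 := by
          have hab := abs_nonneg (v.2 - v.1)
          have : |v.2 - v.1| ≤ 0 := by linarith
          have := abs_eq_zero.mp (le_antisymm this hab)
          linarith
        have hcomb := (convex_convexHull ℝ _) hp1 hp2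
          (by linarith : (0:ℝ) ≤ (1 + v.1)/2) (by linarith : (0:ℝ) ≤ (1 - v.1)/2)
          (by ring)
        convert hcomb using 1
        have hx1 : x = x' := by rw [hxx, hte, one_smul]
        refine Prod.ext ?_ ?_
        · refine Prod.ext ?_ ?_ <;> simp <;> ring_nf <;> linarith [hveq]
        · simp only [Prod.snd_add, Prod.smul_snd]
          rw [← add_smul]
          have hsum : (1 + v.1)/2 + (1 - v.1)/2 = (1:ℝ) := by ring
          rw [hsum, one_smul, hx1]
      · -- t < 1
        have hter : (1 - t) ≠ 0 := by linarith
        have hterpos : (0:ℝ) < 1 - t := by linarith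
        set w : ℝ × ℝ := (1 - t)⁻¹ • (v - s • ((1,1) : ℝ × ℝ)) with hwdef
        have hw1 : w.1 = (1 - t)⁻¹ * (v.1 - s) := by simp [hwdef]
        have hw2 : w.2 = (1 - t)⁻¹ * (v.2 - s) := by simp [hwdef]
        have habs_bound : ∀ u : ℝ, |u| ≤ 1 - t → |(1 - t)⁻¹ * u| ≤ 1 := by
          intro u hu
          rw [abs_mul, abs_of_pos (inv_pos.mpr hterpos)]
          calc (1 - t)⁻¹ * |u| ≤ (1 - t)⁻¹ * (1 - t) :=
                mul_le_mul_of_nonneg_left hu (inv_pos.mpr hterpos).le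
          _ = 1 := inv_mul_cancel₀ hter
        have hwP : w ∈ hexP := by
          rw [mem_hexP_iff]
          refine ⟨?_, ?_, ?_⟩
          · rw [hw1]; exact habs_bound _ (abs_le.mpr ⟨by linarith, by linarith⟩)
          · rw [hw2]; exact habs_bound _ (abs_le.mpr ⟨by linarith, by linarith⟩)
          · rw [hw1, hw2, ← mul_sub]
            exact habs_bound _ (by rw [abs_le]; constructor <;> linarith)
        have hp3 : ((w, (0 : (Fin n → ℝ) × (Fin n → ℝ)))) ∈ convexHull ℝ
            ((hexP ×ˢ ({0} : Set ((Fin n → ℝ) × (Fin n → ℝ)))) ∪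
              (({(1,1), (-1,-1)} : Set (ℝ × ℝ)) ×ˢ X)) :=
          subset_convexHull ℝ _ (Or.inl ⟨hwP, rfl⟩)
        have hcomb := combo3 (convex_convexHull ℝ _) hp1 hp2 hp3
          (by linarith : (0:ℝ) ≤ (t + s)/2) (by linarith : (0:ℝ) ≤ (t - s)/2)
          (by linarith : (0:ℝ) ≤ 1 - t) (by ring)
        have hwv : (1 - t) • w = v - s • ((1,1) : ℝ × ℝ) := by
          rw [hwdef, smul_inv_smul₀ hter]
        convert hcomb using 1
        refine Prod.ext ?_ ?_
        · show v = ((t+s)/2) • ((1,1) : ℝ × ℝ) + ((t-s)/2) • ((-1,-1) : ℝ × ℝ) + (1-t) • w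
          rw [hwv]
          refine Prod.ext ?_ ?_ <;>
            simp only [Prod.fst_add, Prod.snd_add, Prod.smul_fst, Prod.smul_snd,
              Prod.fst_sub, Prod.snd_sub, smul_eq_mul] <;> ring
        · show x = ((t+s)/2) • x' + ((t-s)/2) • x' + (1-t) • (0 : (Fin n → ℝ) × (Fin n → ℝ))
          rw [smul_zero, add_zero, ← add_smul]
          have hts : (t + s)/2 + (t - s)/2 = t := by ring
          rw [hts, ← hxx]
  · -- hull ⊆ susp
    apply convexHull_min
    · rintro ⟨v, x⟩ hp
      rcases hp with ⟨hv, hx⟩ | ⟨hv, hx⟩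
      · simp only [mem_singleton_iff] at hx
        subst hx
        refine ⟨hv, ?_⟩
        rw [homega, gauge_zero, add_zero]
        obtain ⟨h1, h2, h3⟩ := (mem_hexP_iff v).mp hv
        rw [abs_sub_comm] at h3
        exact h3
      · have hg : gauge X x ≤ 1 := gauge_le_one_of_mem hx
        simp only [mem_insert_iff, mem_singleton_iff] at hv
        rcases hv with rfl | rfl
        · exact ⟨mem_hexP_of_vertex _ (by simp), by rw [homega]; simpa using hg⟩
        · exact ⟨mem_hexP_of_vertex _ (by simp), by rw [homega]; simpa using hg⟩
    · rintro ⟨v, x⟩ ⟨hv, hx⟩ ⟨v', y⟩ ⟨hv', hy⟩ a b ha hb hab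
      simp only [homega] at hx hy ⊢
      constructor
      · exact hexP_convex hv hv' ha hb hab
      · have hgadd : gauge X (a • x + b • y) ≤ a * gauge X x + b * gauge X y := by
          calc gauge X (a • x + b • y) ≤ gauge X (a • x) + gauge X (b • y) :=
                gauge_add_le hconv habs _ _
          _ = a * gauge X x + b * gauge X y := by
            rw [gauge_smul_of_nonneg ha, gauge_smul_of_nonneg hb, smul_eq_mul, smul_eq_mul]
        have habsv : |(a * v.2 + b * v'.2) - (a * v.1 + b * v'.1)|
            ≤ a * |v.2 - v.1| + b * |v'.2 - v'.1| := by
          calc |(a * v.2 + b * v'.2) - (a * v.1 + b * v'.1)|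
              = |a * (v.2 - v.1) + b * (v'.2 - v'.1)| := by ring_nf
          _ ≤ |a * (v.2 - v.1)| + |b * (v'.2 - v'.1)| := abs_add_le _ _
          _ = a * |v.2 - v.1| + b * |v'.2 - v'.1| := by
            rw [abs_mul, abs_mul, abs_of_nonneg ha, abs_of_nonneg hb]
        have hgx := gauge_nonneg (s := X) x
        have hgy := gauge_nonneg (s := X) y
        rw [homega]
        simp only [Prod.fst_add, Prod.snd_add, Prod.smul_fst, Prod.smul_snd, smul_eq_mul]
        nlinarith [abs_nonneg (v.2 - v.1), abs_nonneg (v'.2 - v'.1)]
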